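/- Let K ⊆ ℝⁿ be nonempty, compact, and convex with diameter D_K, let F : ℝⁿ → ℝⁿ be continuously differentiable and strongly monotone on K with constant c > 0, and set σ = max_{x∈K} ‖DF(x)‖_op and M₁ = max_{x∈K} ‖F(x)‖. Fix x ∈ K, Δ, Δ̇, ε ∈ ℝⁿ, and let b ∈ argmin_{y∈K} ⟨y, F(x) + Δ⟩. Then ⟨b − x + ε, F(x) + Δ⟩ + ⟨x − b, DF(x)(b − x + ε) + Δ̇⟩ ≤ −U(x, F(x) + Δ) + (1/(2c))‖Δ̇‖² + (σ²/(2c))‖ε‖² + M₁‖ε‖ + ‖ε‖·‖Δ‖. -/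

import Mathlib

open scoped InnerProductSpace
open Filter

lemma mono_fderiv {n : ℕ} {K : Set (EuclideanSpace ℝ (Fin n))} (hKconv : Convex ℝ K)
    {F : EuclideanSpace ℝ (Fin n) → EuclideanSpace ℝ (Fin n)} (hF : ContDiff ℝ 1 F)
    {c : ℝ}
    (hmono : ∀ u ∈ K, ∀ v ∈ K, c * ‖u - v‖ ^ 2 ≤ ⟪u - v, F u - F v⟫_ℝ)
    {x b : EuclideanSpace ℝ (Fin n)} (hx : x ∈ K) (hbK : b ∈ K) :
    c * ‖b - x‖ ^ 2 ≤ ⟪b - x, fderiv ℝ F x (b - x)⟫_ℝ := by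
  set h : EuclideanSpace ℝ (Fin n) := b - x with hh
  -- derivative of g t = ⟪h, F (x + t • h)⟫ at 0 equals ⟪h, fderiv F x h⟫
  have hline : HasDerivAt (fun t : ℝ => x + t • h) h 0 := by
    simpa using ((hasDerivAt_id (0:ℝ)).smul_const h).const_add x
  have hdiff : HasFDerivAt F (fderiv ℝ F x) (x + (0:ℝ) • h) := by
    simpa using (hF.differentiable one_ne_zero (x + (0:ℝ) • h)).hasFDerivAt
  have hcomp : HasDerivAt (fun t : ℝ => F (x + t • h)) (fderiv ℝ F x h) 0 :=
    hdiff.comp_hasDerivAt 0 hline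
  have hg : HasDerivAt (fun t : ℝ => ⟪h, F (x + t • h)⟫_ℝ)
      (⟪h, fderiv ℝ F x h⟫_ℝ) 0 := by
    have := (innerSL ℝ h).hasFDerivAt.comp_hasDerivAt 0 hcomp
    exact this
  have hslope := hasDerivAt_iff_tendsto_slope.1 hg
  have hslope' : Tendsto (slope (fun t : ℝ => ⟪h, F (x + t • h)⟫_ℝ) 0)
      (nhdsWithin 0 (Set.Ioi 0)) (nhds (⟪h, fderiv ℝ F x h⟫_ℝ)) :=
    hslope.mono_left (nhdsWithin_mono 0 (fun t ht => ne_of_gt ht))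
  refine ge_of_tendsto hslope' ?_
  filter_upwards [Ioc_mem_nhdsGT_of_mem (Set.mem_Ico.2 ⟨le_refl (0:ℝ), one_pos⟩)]
    with t ht
  have ht0 : (0:ℝ) < t := ht.1
  have ht1 : t ≤ 1 := ht.2
  have hmem : x + t • h ∈ K := by
    have := hKconv hx hbK (by linarith : (0:ℝ) ≤ 1 - t) (le_of_lt ht0) (by ring)
    have heq : (1 - t) • x + t • b = x + t • h := by
      rw [hh]; module
    rwa [heq] at this
  have hmo := hmono (x + t • h) hmem x hx
  have h1 : (x + t • h) - x = t • h := by abel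
  rw [h1] at hmo
  have h2 : ⟪t • h, F (x + t • h) - F x⟫_ℝ = t * ⟪h, F (x + t • h) - F x⟫_ℝ :=
    real_inner_smul_left _ _ _
  have h3 : ‖t • h‖ ^ 2 = t ^ 2 * ‖h‖ ^ 2 := by
    rw [norm_smul]; simp [abs_of_pos ht0]; ring
  rw [h2, h3] at hmo
  have h4 : c * t * ‖h‖ ^ 2 ≤ ⟪h, F (x + t • h) - F x⟫_ℝ := by
    have := (mul_le_mul_iff_right₀ ht0).1 (by nlinarith : t * (c * t * ‖h‖^2) ≤ t * ⟪h, F (x + t • h) - F x⟫_ℝ)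
    exact this
  have hsl : slope (fun t : ℝ => ⟪h, F (x + t • h)⟫_ℝ) 0 t
      = ⟪h, F (x + t • h) - F x⟫_ℝ / t := by
    rw [slope_def_field]
    simp [inner_sub_right]
  rw [hsl, le_div_iff₀ ht0]
  nlinarith [h4]

/-- key derivative estimate in Theorem 2, stated algebraically: for
`x ∈ K`, disturbance values `Δ, Δ̇, ε` and a best response
`b ∈ argmin_{y∈K} ⟨y, F(x) + Δ⟩`,
`⟨b − x + ε, F(x) + Δ⟩ + ⟨x − b, DF(x)(b − x + ε) + Δ̇⟩
  ≤ −U(x, F(x)+Δ) + (1/(2c))‖Δ̇‖² + (σ²/(2c))‖ε‖² + M₁‖ε‖ + ‖ε‖‖Δ‖`. -/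
theorem stmt_15 {n : ℕ} (K : Set (EuclideanSpace ℝ (Fin n)))
    (hKne : K.Nonempty) (hKcpt : IsCompact K) (hKconv : Convex ℝ K)
    (DK : ℝ)
    (hDK : IsGreatest ((fun p : EuclideanSpace ℝ (Fin n) × EuclideanSpace ℝ (Fin n) =>
      ‖p.1 - p.2‖) '' (K ×ˢ K)) DK)
    (F : EuclideanSpace ℝ (Fin n) → EuclideanSpace ℝ (Fin n))
    (hF : ContDiff ℝ 1 F)
    (c : ℝ) (hc : 0 < c)
    (hmono : ∀ u ∈ K, ∀ v ∈ K, c * ‖u - v‖ ^ 2 ≤ ⟪u - v, F u - F v⟫_ℝ)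
    (σ : ℝ) (hσ : IsGreatest ((fun z => ‖fderiv ℝ F z‖) '' K) σ)
    (M₁ : ℝ) (hM₁ : IsGreatest ((fun z => ‖F z‖) '' K) M₁)
    (m : EuclideanSpace ℝ (Fin n) → ℝ)
    (hm : ∀ π : EuclideanSpace ℝ (Fin n), IsLeast ((fun y => ⟪y, π⟫_ℝ) '' K) (m π))
    (x : EuclideanSpace ℝ (Fin n)) (hx : x ∈ K)
    (Δ Δdot ε : EuclideanSpace ℝ (Fin n))
    (b : EuclideanSpace ℝ (Fin n)) (hbK : b ∈ K)
    (hb : ∀ z ∈ K, ⟪b, F x + Δ⟫_ℝ ≤ ⟪z, F x + Δ⟫_ℝ) :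
    ⟪b - x + ε, F x + Δ⟫_ℝ + ⟪x - b, fderiv ℝ F x (b - x + ε) + Δdot⟫_ℝ ≤
      -(⟪x, F x + Δ⟫_ℝ - m (F x + Δ)) + (1 / (2 * c)) * ‖Δdot‖ ^ 2
        + (σ ^ 2 / (2 * c)) * ‖ε‖ ^ 2 + M₁ * ‖ε‖ + ‖ε‖ * ‖Δ‖ := by
  set π := F x + Δ with hπ
  -- m π = ⟪b, π⟫
  have hmb : m π = ⟪b, π⟫_ℝ := by
    obtain ⟨⟨z, hzK, hz⟩, hlb⟩ := hm π
    have h1 : m π ≤ ⟪b, π⟫_ℝ := hlb ⟨b, hbK, rfl⟩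
    have h2 : ⟪b, π⟫_ℝ ≤ m π := hz ▸ hb z hzK
    linarith
  -- expand LHS
  have hexp : ⟪b - x + ε, π⟫_ℝ + ⟪x - b, fderiv ℝ F x (b - x + ε) + Δdot⟫_ℝ
      = (⟪b, π⟫_ℝ - ⟪x, π⟫_ℝ) + ⟪ε, F x⟫_ℝ + ⟪ε, Δ⟫_ℝ
        - ⟪b - x, fderiv ℝ F x (b - x)⟫_ℝ + ⟪x - b, fderiv ℝ F x ε⟫_ℝ
        + ⟪x - b, Δdot⟫_ℝ := by
    rw [hπ]
    simp only [inner_add_left, inner_add_right, inner_sub_left, map_add,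
      inner_sub_right]
    have : (fderiv ℝ F x) (b - x) = (fderiv ℝ F x) b - (fderiv ℝ F x) x := map_sub _ _ _
    rw [this]
    simp only [inner_sub_right, inner_sub_left]
    ring
  rw [hexp, hmb]
  set r := ‖x - b‖ with hr
  have hr0 : 0 ≤ r := norm_nonneg _
  have hrbx : ‖b - x‖ = r := by rw [hr, norm_sub_rev]
  -- term bounds
  have hA : c * r ^ 2 ≤ ⟪b - x, fderiv ℝ F x (b - x)⟫_ℝ := by
    have := mono_fderiv hKconv hF hmono hx hbK
    rwa [hrbx] at this
  have hσ0 : 0 ≤ σ := le_trans (norm_nonneg _) (hσ.2 ⟨x, hx, rfl⟩)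
  have hB : ⟪x - b, fderiv ℝ F x ε⟫_ℝ ≤ r * (σ * ‖ε‖) := by
    calc ⟪x - b, fderiv ℝ F x ε⟫_ℝ ≤ ‖x - b‖ * ‖fderiv ℝ F x ε‖ :=
          real_inner_le_norm _ _
      _ ≤ r * (σ * ‖ε‖) := by
          apply mul_le_mul_of_nonneg_left _ hr0
          calc ‖fderiv ℝ F x ε‖ ≤ ‖fderiv ℝ F x‖ * ‖ε‖ :=
                (fderiv ℝ F x).le_opNorm ε
            _ ≤ σ * ‖ε‖ := mul_le_mul_of_nonneg_right (hσ.2 ⟨x, hx, rfl⟩) (norm_nonneg _)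
  have hC : ⟪x - b, Δdot⟫_ℝ ≤ r * ‖Δdot‖ := real_inner_le_norm _ _
  have hD : ⟪ε, F x⟫_ℝ ≤ M₁ * ‖ε‖ := by
    calc ⟪ε, F x⟫_ℝ ≤ ‖ε‖ * ‖F x‖ := real_inner_le_norm _ _
      _ ≤ ‖ε‖ * M₁ := mul_le_mul_of_nonneg_left (hM₁.2 ⟨x, hx, rfl⟩) (norm_nonneg _)
      _ = M₁ * ‖ε‖ := mul_comm _ _
  have hE : ⟪ε, Δ⟫_ℝ ≤ ‖ε‖ * ‖Δ‖ := real_inner_le_norm _ _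
  have hyoung : -(c * r ^ 2) + r * (σ * ‖ε‖) + r * ‖Δdot‖ ≤
      (1 / (2 * c)) * ‖Δdot‖ ^ 2 + (σ ^ 2 / (2 * c)) * ‖ε‖ ^ 2 := by
    have heq : (1 / (2 * c)) * ‖Δdot‖ ^ 2 + (σ ^ 2 / (2 * c)) * ‖ε‖ ^ 2
        = (‖Δdot‖ ^ 2 + σ ^ 2 * ‖ε‖ ^ 2) / (2 * c) := by
      field_simp
    rw [heq, le_div_iff₀ (by positivity)]
    nlinarith [sq_nonneg (c * r - σ * ‖ε‖), sq_nonneg (c * r - ‖Δdot‖), sq_nonneg r]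
  linarith [hA, hB, hC, hD, hE, hyoung]
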